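/- Let r, p, n be positive integers with p dividing r and gcd(n, p, r/p) = 1. Then there exists an integer α with 0 ≤ α < r/p such that gcd(r/p, (n−1)αp − n) = 1. -/

import Mathlib

/-- Let `r, p, n` be positive integers with `p ∣ r` and
`gcd(n, p, r/p) = 1`. Then there exists `0 ≤ α < r/p` with
`gcd(r/p, (n-1)αp - n) = 1`. -/
theorem exists_alpha_coprime (r p n : ℕ) (hr : 0 < r) (hp : 0 < p) (hn : 0 < n)
    (hpr : p ∣ r) (hgcd : Nat.gcd n (Nat.gcd p (r / p)) = 1) :
    ∃ α : ℕ, α < r / p ∧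
      Int.gcd ((r / p : ℕ) : ℤ) (((n : ℤ) - 1) * (α : ℤ) * (p : ℤ) - (n : ℤ)) = 1 := by
  set m := r / p with hm_def
  have hm : 0 < m := Nat.div_pos (Nat.le_of_dvd hr hpr) hp
  set X := ∏ q ∈ m.primeFactors.filter (fun q => ¬ q ∣ n), q with hX_def
  refine ⟨X % m, Nat.mod_lt _ hm, ?_⟩
  by_contra hne
  set t : ℤ := ((n : ℤ) - 1) * ((X % m : ℕ) : ℤ) * (p : ℤ) - (n : ℤ) with ht_def
  set g : ℕ := Int.gcd (m : ℤ) t with hg_def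
  have hg0 : g ≠ 0 := by
    intro h
    rw [hg_def, Int.gcd_eq_zero_iff] at h
    exact hm.ne' (by exact_mod_cast h.1)
  have hq : Nat.Prime g.minFac := Nat.minFac_prime hne
  set q := g.minFac with hq_def
  have hqg : q ∣ g := Nat.minFac_dvd g
  have hqm : q ∣ m := by
    have h1 : (g : ℤ) ∣ (m : ℤ) := Int.gcd_dvd_left _ _
    exact_mod_cast dvd_trans (Int.natCast_dvd_natCast.mpr hqg) h1
  have hqt : (q : ℤ) ∣ t := dvd_trans (Int.natCast_dvd_natCast.mpr hqg) (Int.gcd_dvd_right _ _)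
  -- q divides the unreduced expression too
  have hmod : (m : ℤ) ∣ (X : ℤ) - ((X % m : ℕ) : ℤ) := by
    have h0 : m ∣ X - X % m := Nat.dvd_sub_mod X
    have h1 : ((X - X % m : ℕ) : ℤ) = (X : ℤ) - ((X % m : ℕ) : ℤ) := by
      have := Nat.mod_le X m
      omega
    exact h1 ▸ Int.natCast_dvd_natCast.mpr h0
  have hqX' : (q : ℤ) ∣ ((n : ℤ) - 1) * (X : ℤ) * (p : ℤ) - (n : ℤ) := by
    have h1 : (q : ℤ) ∣ ((n : ℤ) - 1) * ((X : ℤ) - ((X % m : ℕ) : ℤ)) * (p : ℤ) :=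
      Dvd.dvd.mul_right (Dvd.dvd.mul_left (dvd_trans (Int.natCast_dvd_natCast.mpr hqm) hmod) _) _
    have := dvd_add hqt h1
    have heq : t + ((n : ℤ) - 1) * ((X : ℤ) - ((X % m : ℕ) : ℤ)) * (p : ℤ)
        = ((n : ℤ) - 1) * (X : ℤ) * (p : ℤ) - (n : ℤ) := by rw [ht_def]; ring
    rwa [heq] at this
  have hqprime : Prime (q : ℤ) := Nat.prime_iff_prime_int.mp hq
  by_cases hcn : q ∣ n
  · -- q ∤ X since every prime factor of X does not divide n
    have hqX : ¬ q ∣ X := by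
      intro hdvd
      rw [hX_def] at hdvd
      obtain ⟨q', hq'mem, hqq'⟩ := (Prime.dvd_finset_prod_iff hq.prime _).mp hdvd
      rw [Finset.mem_filter] at hq'mem
      have hq' : Nat.Prime q' := Nat.prime_of_mem_primeFactors hq'mem.1
      have : q = q' := ((Nat.prime_dvd_prime_iff_eq hq hq').mp hqq')
      exact hq'mem.2 (this ▸ hcn)
    have h1 : (q : ℤ) ∣ ((n : ℤ) - 1) * (X : ℤ) * (p : ℤ) := by
      have h2 : (q : ℤ) ∣ (n : ℤ) := Int.natCast_dvd_natCast.mpr hcn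
      have := dvd_add hqX' h2
      simpa using this
    rcases (hqprime.dvd_mul.mp h1) with h2 | h2
    · rcases (hqprime.dvd_mul.mp h2) with h3 | h3
      · -- q ∣ n - 1 and q ∣ n : q ∣ 1
        have h4 : (q : ℤ) ∣ 1 := by
          have := dvd_sub (Int.natCast_dvd_natCast.mpr hcn) h3
          simpa using this
        have := Int.le_of_dvd one_pos h4
        have := hq.two_le
        omega
      · exact hqX (Int.natCast_dvd_natCast.mp h3)
    · -- q ∣ p, q ∣ n, q ∣ m contradicts hgcd
      have h3 : q ∣ p := Int.natCast_dvd_natCast.mp h2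
      have h4 : q ∣ Nat.gcd n (Nat.gcd p m) :=
        Nat.dvd_gcd hcn (Nat.dvd_gcd h3 hqm)
      rw [hgcd] at h4
      have := hq.two_le
      have := Nat.le_of_dvd one_pos h4
      omega
  · -- q ∤ n, so q ∣ X, hence q ∣ n, contradiction
    have hqX : q ∣ X := by
      rw [hX_def]
      exact Finset.dvd_prod_of_mem _ (Finset.mem_filter.mpr
        ⟨Nat.mem_primeFactors.mpr ⟨hq, hqm, hm.ne'⟩, hcn⟩)
    have h1 : (q : ℤ) ∣ ((n : ℤ) - 1) * (X : ℤ) * (p : ℤ) :=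
      Dvd.dvd.mul_right (Dvd.dvd.mul_left (Int.natCast_dvd_natCast.mpr hqX) _) _
    have h2 : (q : ℤ) ∣ (n : ℤ) := by
      have := dvd_sub h1 hqX'
      simpa using this
    exact hcn (Int.natCast_dvd_natCast.mp h2)
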